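/- Case (III): Suppose χ₁ has order exactly r and χ₂ has order exactly s. Then every representation (V, ρ, X, Y) additionally satisfying X^r = id_V, Y^s = id_V, and X∘Y = χ₂(g₁)·Y∘X decomposes as a direct sum of irreducible subrepresentations (subspaces stable under X, Y and all ρ(h), irreducible under this action). (This expresses that the algebra A(ξ) of case (III) is semisimple.) -/

import Mathlib

noncomputable section

/-- `(V, ρ, X, Y)` is a representation of the common part of the rank-2 algebra `A(ξ)`:
`ρ` is a group homomorphism (recorded via multiplicativity and unitality),
`ρ(h)∘X = χ₁(h)·(X∘ρ(h))` and `ρ(h)∘Y = χ₂(h)·(Y∘ρ(h))` for all `h ∈ Γ`, and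
`ρ(g) = ξ(g)·id` for all `g ∈ Λ`. -/
def IsRep {Γ : Type*} [CommGroup Γ] (χ₁ χ₂ : Γ →* ℂˣ) (Λ : Subgroup Γ) (ξ : ↥Λ →* ℂˣ)
    {V : Type*} [AddCommGroup V] [Module ℂ V]
    (ρ : Γ → Module.End ℂ V) (X Y : Module.End ℂ V) : Prop :=
  (∀ a b : Γ, ρ (a * b) = ρ a * ρ b) ∧ ρ 1 = 1 ∧
  (∀ h : Γ, ρ h * X = (χ₁ h : ℂ) • (X * ρ h)) ∧
  (∀ h : Γ, ρ h * Y = (χ₂ h : ℂ) • (Y * ρ h)) ∧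
  ∀ g : Λ, ρ (g : Γ) = (ξ g : ℂ) • (1 : Module.End ℂ V)

/-- A subspace `W` is stable under `X`, `Y` and all `ρ(h)`. -/
def Stable2 {Γ : Type*} {V : Type*} [AddCommGroup V] [Module ℂ V]
    (ρ : Γ → Module.End ℂ V) (X Y : Module.End ℂ V) (W : Submodule ℂ V) : Prop :=
  (∀ v ∈ W, X v ∈ W) ∧ (∀ v ∈ W, Y v ∈ W) ∧ ∀ h : Γ, ∀ v ∈ W, ρ h v ∈ W

/-- Irreducibility: `V ≠ 0` and the only subspaces stable under `X`, `Y` and all `ρ(h)`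
are `0` and `V`. -/
def Irred2 {Γ : Type*} {V : Type*} [AddCommGroup V] [Module ℂ V]
    (ρ : Γ → Module.End ℂ V) (X Y : Module.End ℂ V) : Prop :=
  (∃ v : V, v ≠ 0) ∧ ∀ W : Submodule ℂ V, Stable2 ρ X Y W → W = ⊥ ∨ W = ⊤

section Aux

open Module


variable {V : Type*} [AddCommGroup V] [Module ℂ V]

lemma unit_inv_stab [FiniteDimensional ℂ V] (u : (Module.End ℂ V)ˣ)
    (W : Submodule ℂ V) (h : ∀ v ∈ W, (u : Module.End ℂ V) v ∈ W) :
    ∀ v ∈ W, ((u⁻¹ : (Module.End ℂ V)ˣ) : Module.End ℂ V) v ∈ W := by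
  have hle : W.map (u : Module.End ℂ V) ≤ W := by
    rintro _ ⟨v, hv, rfl⟩; exact h v hv
  have hfr : finrank ℂ (W.map (u : Module.End ℂ V)) = finrank ℂ W := by
    have : W.map (u : Module.End ℂ V)
        = W.map ((LinearMap.GeneralLinearGroup.toLinearEquiv u : V ≃ₗ[ℂ] V) : V →ₗ[ℂ] V) := rfl
    rw [this, LinearEquiv.finrank_map_eq]
  have heq : W.map (u : Module.End ℂ V) = W :=
    Submodule.eq_of_le_of_finrank_le hle (le_of_eq hfr.symm)
  intro v hv
  rw [← heq] at hv
  obtain ⟨w, hw, rfl⟩ := hv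
  have : ((u⁻¹ : (Module.End ℂ V)ˣ) : Module.End ℂ V) ((u : Module.End ℂ V) w)
      = (((u⁻¹ * u : (Module.End ℂ V)ˣ) : Module.End ℂ V)) w := by
    rw [Units.val_mul, Module.End.mul_apply]
  rw [this, inv_mul_cancel]
  simpa using hw

lemma maschke_compl [FiniteDimensional ℂ V] (G : Subgroup (Module.End ℂ V)ˣ)
    (hfin : Finite ↥G) (W : Submodule ℂ V)
    (hW : ∀ g : ↥G, ∀ v ∈ W, ((g : (Module.End ℂ V)ˣ) : Module.End ℂ V) v ∈ W) :
    ∃ W' : Submodule ℂ V,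
      (∀ g : ↥G, ∀ v ∈ W', ((g : (Module.End ℂ V)ˣ) : Module.End ℂ V) v ∈ W') ∧ IsCompl W W' := by
  classical
  have : Fintype ↥G := Fintype.ofFinite _
  obtain ⟨C, hC⟩ := Submodule.exists_isCompl W
  set p : Module.End ℂ V := W.subtype ∘ₗ (W.projectionOnto C hC) with hp
  have hpW : ∀ v : V, p v ∈ W := fun v => (W.projectionOnto C hC v).2
  have hpid : ∀ v ∈ W, p v = v := by
    intro v hv
    have := Submodule.linearProjOfIsCompl_apply_left hC ⟨v, hv⟩
    simp only [hp, LinearMap.comp_apply]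
    rw [this]
    rfl
  set u : ↥G → Module.End ℂ V := fun g => ((g : (Module.End ℂ V)ˣ) : Module.End ℂ V) with hu
  have humul : ∀ a b : ↥G, u a * u b = u (a * b) := fun a b => rfl
  have huinv : ∀ a : ↥G, u a⁻¹ * u a = 1 := by
    intro a; rw [humul, inv_mul_cancel]; rfl
  set T₀ : Module.End ℂ V := ∑ g : ↥G, u g⁻¹ * p * u g with hT₀
  have hT₀W : ∀ v : V, T₀ v ∈ W := by
    intro v
    rw [hT₀, LinearMap.sum_apply]
    refine Submodule.sum_mem _ fun g _ => ?_
    rw [Module.End.mul_apply, Module.End.mul_apply]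
    exact hW g⁻¹ _ (hpW _)
  have hT₀id : ∀ v ∈ W, T₀ v = (Fintype.card ↥G : ℂ) • v := by
    intro v hv
    rw [hT₀, LinearMap.sum_apply]
    have : ∀ g : ↥G, (u g⁻¹ * p * u g) v = v := by
      intro g
      rw [Module.End.mul_apply, Module.End.mul_apply, hpid _ (hW g v hv),
        ← Module.End.mul_apply, huinv, Module.End.one_apply]
    rw [Finset.sum_congr rfl fun g _ => this g, Finset.sum_const, Finset.card_univ,
      ← Nat.cast_smul_eq_nsmul ℂ]
  have hT₀comm : ∀ g₀ : ↥G, T₀ * u g₀ = u g₀ * T₀ := by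
    intro g₀
    have key : ∑ g : ↥G, (u g⁻¹ * p * u g) * u g₀ = ∑ g : ↥G, u g₀ * (u g⁻¹ * p * u g) := by
      refine Fintype.sum_equiv (Equiv.mulRight g₀) _ _ fun g => ?_
      have h1 : ((Equiv.mulRight g₀) g)⁻¹ = g₀⁻¹ * g⁻¹ := by
        simp [mul_comm]
      show u g⁻¹ * p * u g * u g₀ = u g₀ * (u ((Equiv.mulRight g₀) g)⁻¹ * p * u ((Equiv.mulRight g₀) g))
      rw [h1, ← humul, show (Equiv.mulRight g₀) g = g * g₀ from rfl, ← humul]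
      have : u g₀ * (u g₀⁻¹ * u g⁻¹ * p * (u g * u g₀)) = (u g₀ * u g₀⁻¹) * u g⁻¹ * p * u g * u g₀ := by
        simp only [mul_assoc]
      rw [this, humul, mul_inv_cancel]
      have hone : u 1 = 1 := rfl
      rw [hone, one_mul]
    rw [hT₀, Finset.sum_mul, Finset.mul_sum] at *
    exact key
  set T : Module.End ℂ V := (Fintype.card ↥G : ℂ)⁻¹ • T₀ with hT
  have hcard : (Fintype.card ↥G : ℂ) ≠ 0 := by
    exact_mod_cast Fintype.card_ne_zero
  have hTW : ∀ v : V, T v ∈ W := fun v => Submodule.smul_mem _ _ (hT₀W v)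
  have hTid : ∀ v ∈ W, T v = v := by
    intro v hv
    rw [hT, LinearMap.smul_apply, hT₀id v hv, smul_smul, inv_mul_cancel₀ hcard, one_smul]
  have hTcomm : ∀ g : ↥G, T * u g = u g * T := by
    intro g
    rw [hT, smul_mul_assoc, mul_smul_comm, hT₀comm]
  refine ⟨LinearMap.ker T, ?_, ?_⟩
  · intro g v hv
    have : T ((u g) v) = (u g) (T v) := by
      rw [← Module.End.mul_apply, hTcomm, Module.End.mul_apply]
    rw [LinearMap.mem_ker] at hv ⊢
    rw [this, hv, map_zero]
  · have hproj : ∀ x : W, (LinearMap.codRestrict W T hTW) x = x := by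
      intro x
      ext
      simpa using hTid x x.2
    have := LinearMap.isCompl_of_proj hproj
    rwa [LinearMap.ker_codRestrict] at this

lemma decomp_of_compl [FiniteDimensional ℂ V] (P : Submodule ℂ V → Prop)
    (hinf : ∀ a b, P a → P b → P (a ⊓ b))
    (hcompl : ∀ W, P W → ∃ W', P W' ∧ IsCompl W W') :
    ∀ (N : ℕ) (W : Submodule ℂ V), finrank ℂ W ≤ N → P W →
      ∃ (n : ℕ) (f : Fin n → Submodule ℂ V), iSupIndep f ∧ (⨆ i, f i) = W ∧
        ∀ i, P (f i) ∧ f i ≠ ⊥ ∧ ∀ U, U ≤ f i → P U → U = ⊥ ∨ U = f i := by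
  intro N
  induction N with
  | zero =>
    intro W hWr _
    have hbot : W = ⊥ := by
      rw [← Submodule.finrank_eq_zero (S := W)]; omega
    exact ⟨0, Fin.elim0, fun i => i.elim0, by rw [iSup_of_empty]; exact hbot.symm,
      fun i => i.elim0⟩
  | succ N ih =>
    intro W hWr hP
    by_cases hbot : W = ⊥
    · exact ⟨0, Fin.elim0, fun i => i.elim0, by rw [iSup_of_empty]; exact hbot.symm,
        fun i => i.elim0⟩
    · have hne : (Set.Nonempty {d : ℕ | ∃ U : Submodule ℂ V,
          U ≤ W ∧ P U ∧ U ≠ ⊥ ∧ finrank ℂ U = d}) := ⟨_, W, le_rfl, hP, hbot, rfl⟩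
      obtain ⟨U, hUW, hPU, hUbot, hUd⟩ := Nat.sInf_mem hne
      have hmin : ∀ U', U' ≤ U → P U' → U' = ⊥ ∨ U' = U := by
        intro U' hle hPU'
        by_cases h' : U' = ⊥
        · exact Or.inl h'
        · right
          have h1 : sInf {d : ℕ | ∃ U : Submodule ℂ V,
              U ≤ W ∧ P U ∧ U ≠ ⊥ ∧ finrank ℂ U = d} ≤ finrank ℂ U' :=
            Nat.sInf_le ⟨U', hle.trans hUW, hPU', h', rfl⟩
          exact Submodule.eq_of_le_of_finrank_le hle (by omega)
      obtain ⟨C, hPC, hCc⟩ := hcompl U hPU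
      set C' := C ⊓ W with hC'
      have hPC' : P C' := hinf _ _ hPC hP
      have hdisj : Disjoint U C' := hCc.disjoint.mono_right inf_le_left
      have hsupUC : U ⊔ C' = W := by
        have h2 := sup_inf_assoc_of_le (x := U) C hUW
        rw [hCc.sup_eq_top, top_inf_eq] at h2
        exact h2.symm
      have hrank : finrank ℂ C' ≤ N := by
        have h1 := Submodule.finrank_sup_add_finrank_inf_eq U C'
        rw [hsupUC, hdisj.eq_bot] at h1
        have h2 : finrank ℂ (⊥ : Submodule ℂ V) = 0 := finrank_bot ℂ V
        have h3 : finrank ℂ U ≠ 0 :=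
          fun h => hUbot ((Submodule.finrank_eq_zero (S := U)).mp h)
        omega
      obtain ⟨n, f, hind, hsupf, hprop⟩ := ih C' hrank hPC'
      have hfC' : ∀ k, f k ≤ C' := fun k => hsupf ▸ le_iSup f k
      refine ⟨n + 1, Fin.cons U f, ?_, ?_, ?_⟩
      · rw [iSupIndep_def]
        intro i
        induction i using Fin.cases with
        | zero =>
          rw [Fin.cons_zero]
          refine hdisj.mono_right (iSup_le fun j => iSup_le fun hj => ?_)
          obtain ⟨k, rfl⟩ := Fin.eq_succ_of_ne_zero hj
          rw [Fin.cons_succ]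
          exact hfC' k
        | succ k =>
          rw [Fin.cons_succ]
          have hB : (⨆ (j : Fin n) (_ : j ≠ k), f j) ≤ C' :=
            iSup_le fun j => iSup_le fun _ => hfC' j
          have d1 : Disjoint (f k) (⨆ (j : Fin n) (_ : j ≠ k), f j) := iSupIndep_def.mp hind k
          have d2 : Disjoint (f k ⊔ ⨆ (j : Fin n) (_ : j ≠ k), f j) U :=
            hdisj.symm.mono_left (sup_le (hfC' k) hB)
          have d3 : Disjoint (f k) ((⨆ (j : Fin n) (_ : j ≠ k), f j) ⊔ U) :=
            d1.disjoint_sup_right_of_disjoint_sup_left d2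
          refine d3.mono_right (iSup_le fun j => iSup_le fun hj => ?_)
          induction j using Fin.cases with
          | zero => rw [Fin.cons_zero]; exact le_sup_right
          | succ m =>
            rw [Fin.cons_succ]
            have hm : m ≠ k := fun h => hj (by rw [h])
            exact le_sup_of_le_left (le_iSup₂ (f := fun j _ => f j) m hm)
      · have h1 : (⨆ i, Fin.cons U f i) = U ⊔ ⨆ i, f i := by
          apply le_antisymm
          · refine iSup_le fun i => ?_
            induction i using Fin.cases with
            | zero => rw [Fin.cons_zero]; exact le_sup_left
            | succ k => rw [Fin.cons_succ]; exact le_sup_of_le_right (le_iSup f k)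
          · refine sup_le ?_ (iSup_le fun k => ?_)
            · have := le_iSup (Fin.cons U f) 0
              rwa [Fin.cons_zero] at this
            · have := le_iSup (Fin.cons U f) k.succ
              rwa [Fin.cons_succ] at this
        rw [h1, hsupf, hsupUC]
      · intro i
        induction i using Fin.cases with
        | zero => rw [Fin.cons_zero]; exact ⟨hPU, hUbot, hmin⟩
        | succ k => rw [Fin.cons_succ]; exact hprop k

end Aux

section Main

/-- Case (III): suppose `χ₁` has order exactly `r` and `χ₂` has order exactly `s`. Then
every representation `(V, ρ, X, Y)` with `X^r = id`, `Y^s = id` and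
`X∘Y = χ₂(g₁)·(Y∘X)` decomposes as a direct sum (an independent spanning family) of
subspaces, each stable under `X`, `Y` and all `ρ(h)` and irreducible under this action;
i.e. the algebra `A(ξ)` of case (III) is semisimple. -/
theorem caseIII_semisimple {Γ : Type*} [CommGroup Γ] [Fintype Γ] (g₁ g₂ : Γ)
    (χ₁ χ₂ : Γ →* ℂˣ) (h12 : χ₁ g₂ * χ₂ g₁ = 1)
    (r : ℕ) (hr : 1 < r) (hq : IsPrimitiveRoot ((χ₁ g₁ : ℂˣ) : ℂ) r)
    (hord₁ : orderOf χ₁ = r)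
    (s : ℕ) (hs : 1 < s) (hq₂ : IsPrimitiveRoot ((χ₂ g₂ : ℂˣ) : ℂ) s)
    (hord₂ : orderOf χ₂ = s)
    (Λ : Subgroup Γ) (hΛ : ∀ g : Γ, g ∈ Λ ↔ (χ₁ g = 1 ∧ χ₂ g = 1)) (ξ : ↥Λ →* ℂˣ)
    (V : Type*) [AddCommGroup V] [Module ℂ V] [FiniteDimensional ℂ V]
    (ρ : Γ → Module.End ℂ V) (X Y : Module.End ℂ V)
    (hrep : IsRep χ₁ χ₂ Λ ξ ρ X Y)
    (hX : X ^ r = 1) (hY : Y ^ s = 1)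
    (hXY : X * Y = (χ₂ g₁ : ℂ) • (Y * X)) :
    ∃ (ι : Type) (W : ι → Submodule ℂ V),
      iSupIndep W ∧ (⨆ i, W i) = ⊤ ∧
      ∀ i : ι, Stable2 ρ X Y (W i) ∧ W i ≠ ⊥ ∧
        ∀ U : Submodule ℂ V, U ≤ W i → Stable2 ρ X Y U → U = ⊥ ∨ U = W i := by
  classical
  obtain ⟨h_mul, h_one, hE1, hE2, -⟩ := hrep
  have hr1 : 1 ≤ r := by omega
  have hs1 : 1 ≤ s := by omega
  -- the basic units
  have hXu1 : X * X ^ (r - 1) = 1 := by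
    rw [← pow_succ', Nat.sub_add_cancel hr1]; exact hX
  have hXu2 : X ^ (r - 1) * X = 1 := by
    rw [← pow_succ, Nat.sub_add_cancel hr1]; exact hX
  have hYu1 : Y * Y ^ (s - 1) = 1 := by
    rw [← pow_succ', Nat.sub_add_cancel hs1]; exact hY
  have hYu2 : Y ^ (s - 1) * Y = 1 := by
    rw [← pow_succ, Nat.sub_add_cancel hs1]; exact hY
  set Xu : (Module.End ℂ V)ˣ := ⟨X, X ^ (r - 1), hXu1, hXu2⟩ with hXudef
  set Yu : (Module.End ℂ V)ˣ := ⟨Y, Y ^ (s - 1), hYu1, hYu2⟩ with hYudef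
  set ρu : Γ → (Module.End ℂ V)ˣ := fun h =>
    ⟨ρ h, ρ h⁻¹, by rw [← h_mul, mul_inv_cancel]; exact h_one,
      by rw [← h_mul, inv_mul_cancel]; exact h_one⟩ with hρudef
  set su : ℂˣ →* (Module.End ℂ V)ˣ :=
    Units.map (algebraMap ℂ (Module.End ℂ V)).toMonoidHom with hsudef
  have hXuval : ((Xu : (Module.End ℂ V)ˣ) : Module.End ℂ V) = X := rfl
  have hYuval : ((Yu : (Module.End ℂ V)ˣ) : Module.End ℂ V) = Y := rfl
  have hρuval : ∀ h : Γ, ((ρu h : (Module.End ℂ V)ˣ) : Module.End ℂ V) = ρ h := fun _ => rfl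
  have hsu_val : ∀ c : ℂˣ,
      ((su c : (Module.End ℂ V)ˣ) : Module.End ℂ V) = (c : ℂ) • (1 : Module.End ℂ V) := by
    intro c
    show (algebraMap ℂ (Module.End ℂ V)) (c : ℂ) = _
    rw [Module.algebraMap_end_eq_smul_id]
    rfl
  have hcent : ∀ (c : ℂˣ) (w : (Module.End ℂ V)ˣ), su c * w = w * su c := by
    intro c w
    refine Units.ext ?_
    rw [Units.val_mul, Units.val_mul, hsu_val, smul_mul_assoc, mul_smul_comm, one_mul, mul_one]
  have hpull : ∀ (d : ℂˣ) (A B : (Module.End ℂ V)ˣ), A * (su d * B) = su d * (A * B) :=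
    fun d A B => by rw [← mul_assoc, ← hcent, mul_assoc]
  -- End-level commutation facts
  have hc0 : (χ₂ g₁ : ℂ) ≠ 0 := Units.ne_zero _
  have EYX : Y * X = ((χ₂ g₁ : ℂ))⁻¹ • (X * Y) := by
    rw [hXY, smul_smul, inv_mul_cancel₀ hc0, one_smul]
  have E5 : ∀ b : ℕ, Y ^ b * X = (((χ₂ g₁ : ℂ))⁻¹ ^ b) • (X * Y ^ b) := by
    intro b
    induction b with
    | zero => simp
    | succ b ih =>
      calc Y ^ (b + 1) * X = Y ^ b * (Y * X) := by rw [pow_succ, mul_assoc]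
      _ = ((χ₂ g₁ : ℂ))⁻¹ • (Y ^ b * (X * Y)) := by rw [EYX, mul_smul_comm]
      _ = ((χ₂ g₁ : ℂ))⁻¹ • ((Y ^ b * X) * Y) := by rw [mul_assoc]
      _ = ((χ₂ g₁ : ℂ))⁻¹ • ((((χ₂ g₁ : ℂ))⁻¹ ^ b) • ((X * Y ^ b) * Y)) := by
          rw [ih, smul_mul_assoc]
      _ = (((χ₂ g₁ : ℂ))⁻¹ ^ (b + 1)) • (X * Y ^ (b + 1)) := by
          rw [smul_smul, ← pow_succ', mul_assoc, ← pow_succ]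
  set ζ : ℂˣ := (χ₂ g₁)⁻¹ with hζdef
  have hζval : (ζ : ℂ) = ((χ₂ g₁ : ℂ))⁻¹ := by
    rw [hζdef]; exact Units.val_inv_eq_inv_val _
  -- unit-level commutation facts
  have hYXu : ∀ b : ℕ, Yu ^ b * Xu = su (ζ ^ b) * (Xu * Yu ^ b) := by
    intro b
    refine Units.ext ?_
    simp only [Units.val_mul, Units.val_pow_eq_pow_val, hsu_val, hXuval, hYuval,
      hζval, smul_mul_assoc, one_mul]
    exact E5 b
  have hρXu : ∀ h : Γ, ρu h * Xu = su (χ₁ h) * (Xu * ρu h) := by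
    intro h
    refine Units.ext ?_
    simp only [Units.val_mul, hsu_val, hXuval, hρuval, smul_mul_assoc, one_mul]
    exact hE1 h
  have hρYu : ∀ h : Γ, ρu h * Yu = su (χ₂ h) * (Yu * ρu h) := by
    intro h
    refine Units.ext ?_
    simp only [Units.val_mul, hsu_val, hYuval, hρuval, smul_mul_assoc, one_mul]
    exact hE2 h
  have hρρ : ∀ h h' : Γ, ρu h * ρu h' = ρu (h * h') := fun h h' => Units.ext (h_mul h h').symm
  have hρ1 : ρu 1 = 1 := Units.ext h_one
  have hXur : Xu ^ r = 1 := Units.ext (by rw [Units.val_pow_eq_pow_val]; exact hX)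
  have hYus : Yu ^ s = 1 := Units.ext (by rw [Units.val_pow_eq_pow_val]; exact hY)
  have hXuinv : Xu⁻¹ = Xu ^ (r - 1) := by
    apply inv_eq_of_mul_eq_one_right
    rw [← pow_succ', Nat.sub_add_cancel hr1, hXur]
  have hYuinv : Yu⁻¹ = Yu ^ (s - 1) := by
    apply inv_eq_of_mul_eq_one_right
    rw [← pow_succ', Nat.sub_add_cancel hs1, hYus]
  have hρinv : ∀ h : Γ, (ρu h)⁻¹ = ρu h⁻¹ := fun h =>
    inv_eq_of_mul_eq_one_right (by rw [hρρ, mul_inv_cancel, hρ1])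
  -- scalars are n-th roots of unity
  set n : ℕ := Fintype.card Γ with hndef
  have hn0 : 0 < n := Fintype.card_pos
  have hχ₁n : ∀ h : Γ, (χ₁ h) ^ n = 1 := fun h => by
    rw [← map_pow, pow_card_eq_one, map_one]
  have hχ₂n : ∀ h : Γ, (χ₂ h) ^ n = 1 := fun h => by
    rw [← map_pow, pow_card_eq_one, map_one]
  have hζn : ζ ^ n = 1 := by rw [hζdef, inv_pow, hχ₂n, inv_one]
  -- the group and the finite normal-form set
  set gens : Set (Module.End ℂ V)ˣ := {Xu, Yu} ∪ Set.range ρu with hgensdef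
  set G : Subgroup (Module.End ℂ V)ˣ := Subgroup.closure gens with hGdef
  set F : Set (Module.End ℂ V)ˣ :=
    {w | ∃ (c : ℂˣ) (a b : ℕ) (h : Γ), c ^ n = 1 ∧ a < r ∧ b < s ∧
      w = su c * (Xu ^ a * (Yu ^ b * ρu h))} with hFdef
  have hnormal : ∀ (c : ℂˣ) (a b : ℕ) (h : Γ), c ^ n = 1 →
      su c * (Xu ^ a * (Yu ^ b * ρu h)) ∈ F := by
    intro c a b h hc
    refine ⟨c, a % r, b % s, h, hc, Nat.mod_lt _ (by omega), Nat.mod_lt _ (by omega), ?_⟩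
    rw [pow_eq_pow_mod a hXur, pow_eq_pow_mod b hYus]
  have h1F : (1 : (Module.End ℂ V)ˣ) ∈ F :=
    ⟨1, 0, 0, 1, one_pow n, by omega, by omega, by rw [map_one, hρ1]; simp⟩
  have hstepρ : ∀ w ∈ F, ∀ h' : Γ, w * ρu h' ∈ F := by
    rintro w ⟨c, a, b, h, hc, ha, hb, rfl⟩ h'
    have e : su c * (Xu ^ a * (Yu ^ b * ρu h)) * ρu h'
        = su c * (Xu ^ a * (Yu ^ b * ρu (h * h'))) := by
      simp only [mul_assoc, hρρ]
    rw [e]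
    exact hnormal c a b (h * h') hc
  have hstepX : ∀ w ∈ F, w * Xu ∈ F := by
    rintro w ⟨c, a, b, h, hc, ha, hb, rfl⟩
    have e1 : (Yu ^ b * ρu h) * Xu = su (χ₁ h * ζ ^ b) * (Xu * (Yu ^ b * ρu h)) := by
      refine Units.ext ?_
      simp only [Units.val_mul, Units.val_pow_eq_pow_val, hsu_val, hXuval, hYuval, hρuval,
        hζval, smul_mul_assoc, one_mul]
      rw [mul_assoc, hE1 h, mul_smul_comm, ← mul_assoc, E5 b, smul_mul_assoc, smul_smul,
        mul_assoc]
    have e : su c * (Xu ^ a * (Yu ^ b * ρu h)) * Xu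
        = su (c * (χ₁ h * ζ ^ b)) * (Xu ^ (a + 1) * (Yu ^ b * ρu h)) := by
      rw [mul_assoc, mul_assoc, e1, hpull, ← mul_assoc (su c), ← map_mul,
        ← mul_assoc (Xu ^ a), ← pow_succ]
    rw [e]
    refine hnormal _ _ _ _ ?_
    rw [mul_pow, mul_pow, hc, hχ₁n, ← pow_mul, mul_comm b n, pow_mul, hζn, one_pow]
    simp
  have hstepY : ∀ w ∈ F, w * Yu ∈ F := by
    rintro w ⟨c, a, b, h, hc, ha, hb, rfl⟩
    have e2 : (Yu ^ b * ρu h) * Yu = su (χ₂ h) * (Yu ^ (b + 1) * ρu h) := by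
      refine Units.ext ?_
      simp only [Units.val_mul, Units.val_pow_eq_pow_val, hsu_val, hYuval, hρuval,
        smul_mul_assoc, one_mul]
      rw [mul_assoc, hE2 h, mul_smul_comm, ← mul_assoc, ← pow_succ]
    have e : su c * (Xu ^ a * (Yu ^ b * ρu h)) * Yu
        = su (c * χ₂ h) * (Xu ^ a * (Yu ^ (b + 1) * ρu h)) := by
      rw [mul_assoc, mul_assoc, e2, hpull, ← mul_assoc (su c), ← map_mul]
    rw [e]
    refine hnormal _ _ _ _ ?_
    rw [mul_pow, hc, hχ₂n]
    simp
  have hstepXpow : ∀ w ∈ F, ∀ k : ℕ, w * Xu ^ k ∈ F := by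
    intro w hw k
    induction k with
    | zero => simpa using hw
    | succ k ih =>
      rw [pow_succ, ← mul_assoc]
      exact hstepX _ ih
  have hstepYpow : ∀ w ∈ F, ∀ k : ℕ, w * Yu ^ k ∈ F := by
    intro w hw k
    induction k with
    | zero => simpa using hw
    | succ k ih =>
      rw [pow_succ, ← mul_assoc]
      exact hstepY _ ih
  -- every element of G has the normal form
  have hGF : ∀ w : (Module.End ℂ V)ˣ, w ∈ G → w ∈ F := by
    intro w hw
    have hw' : w ∈ Submonoid.closure (gens ∪ gens⁻¹) := by
      rw [← Subgroup.closure_toSubmonoid]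
      exact hw
    obtain ⟨l, hl, rfl⟩ := Submonoid.exists_list_of_mem_closure hw'
    clear hw hw'
    induction l using List.reverseRecOn with
    | nil => simpa using h1F
    | append_singleton l y ih =>
      rw [List.prod_append, List.prod_singleton]
      have hy : y ∈ gens ∪ gens⁻¹ := hl y (by simp)
      have hlF : l.prod ∈ F := ih fun z hz => hl z (by simp [hz])
      rcases hy with hy | hy
      · simp only [hgensdef, Set.mem_union, Set.mem_insert_iff, Set.mem_singleton_iff,
          Set.mem_range] at hy
        rcases hy with (rfl | rfl) | ⟨h', rfl⟩
        · exact hstepX _ hlF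
        · exact hstepY _ hlF
        · exact hstepρ _ hlF h'
      · rw [Set.mem_inv] at hy
        simp only [hgensdef, Set.mem_union, Set.mem_insert_iff, Set.mem_singleton_iff,
          Set.mem_range] at hy
        rcases hy with (hy | hy) | ⟨h', hy⟩
        · have : y = Xu⁻¹ := by rw [← hy, inv_inv]
          rw [this, hXuinv]
          exact hstepXpow _ hlF _
        · have : y = Yu⁻¹ := by rw [← hy, inv_inv]
          rw [this, hYuinv]
          exact hstepYpow _ hlF _
        · have h3 : y = (ρu h')⁻¹ := by rw [hy, inv_inv]
          rw [h3, hρinv]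
          exact hstepρ _ hlF _
  have hFfin : F.Finite := by
    haveI : NeZero n := ⟨by omega⟩
    apply Set.Finite.subset (Set.finite_range
      (fun z : (↥(rootsOfUnity n ℂ)) × Fin r × Fin s × Γ =>
        su (z.1 : ℂˣ) * (Xu ^ (z.2.1 : ℕ) * (Yu ^ (z.2.2.1 : ℕ) * ρu z.2.2.2))))
    rintro w ⟨c, a, b, h, hc, ha, hb, rfl⟩
    exact ⟨⟨⟨c, (mem_rootsOfUnity n c).mpr hc⟩, ⟨a, ha⟩, ⟨b, hb⟩, h⟩, rfl⟩
  have hGfin : Finite ↥G := by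
    have h2 : ((G : Set (Module.End ℂ V)ˣ)).Finite :=
      hFfin.subset fun w hw => hGF w hw
    exact h2.to_subtype
  -- relating Stable2 to stability under G
  have hstab : ∀ W : Submodule ℂ V, Stable2 ρ X Y W →
      ∀ g : ↥G, ∀ v ∈ W, ((g : (Module.End ℂ V)ˣ) : Module.End ℂ V) v ∈ W := by
    intro W hSW
    have key : ∀ x ∈ G, ∀ v ∈ W, (x : Module.End ℂ V) v ∈ W := by
      intro x hx
      refine Subgroup.closure_induction
        (p := fun (x : (Module.End ℂ V)ˣ) _ => ∀ v ∈ W, (x : Module.End ℂ V) v ∈ W)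
        ?_ ?_ ?_ ?_ hx
      · intro x hx
        simp only [hgensdef, Set.mem_union, Set.mem_insert_iff, Set.mem_singleton_iff,
          Set.mem_range] at hx
        rcases hx with (rfl | rfl) | ⟨h', rfl⟩
        · exact hSW.1
        · exact hSW.2.1
        · exact hSW.2.2 h'
      · intro v hv
        simpa using hv
      · intro x y _ _ px py v hv
        rw [Units.val_mul, Module.End.mul_apply]
        exact px _ (py v hv)
      · intro x _ px
        exact unit_inv_stab x W px
    exact fun g => key (g : (Module.End ℂ V)ˣ) g.2
  have hXG : Xu ∈ G := Subgroup.subset_closure (by simp [hgensdef])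
  have hYG : Yu ∈ G := Subgroup.subset_closure (by simp [hgensdef])
  have hρG : ∀ h : Γ, ρu h ∈ G := fun h => Subgroup.subset_closure (by simp [hgensdef])
  have hPcompl : ∀ W, Stable2 ρ X Y W → ∃ W', Stable2 ρ X Y W' ∧ IsCompl W W' := by
    intro W hSW
    obtain ⟨W', hW'G, hc⟩ := maschke_compl G hGfin W (hstab W hSW)
    refine ⟨W', ⟨fun v hv => ?_, fun v hv => ?_, fun h v hv => ?_⟩, hc⟩
    · exact hW'G ⟨Xu, hXG⟩ v hv
    · exact hW'G ⟨Yu, hYG⟩ v hv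
    · exact hW'G ⟨ρu h, hρG h⟩ v hv
  have hPinf : ∀ a b : Submodule ℂ V,
      Stable2 ρ X Y a → Stable2 ρ X Y b → Stable2 ρ X Y (a ⊓ b) := by
    intro a b ha hb
    refine ⟨fun v hv => ?_, fun v hv => ?_, fun h v hv => ?_⟩
    · rw [Submodule.mem_inf] at hv ⊢
      exact ⟨ha.1 v hv.1, hb.1 v hv.2⟩
    · rw [Submodule.mem_inf] at hv ⊢
      exact ⟨ha.2.1 v hv.1, hb.2.1 v hv.2⟩
    · rw [Submodule.mem_inf] at hv ⊢
      exact ⟨ha.2.2 h v hv.1, hb.2.2 h v hv.2⟩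
  have htop : Stable2 ρ X Y (⊤ : Submodule ℂ V) :=
    ⟨fun v _ => Submodule.mem_top, fun v _ => Submodule.mem_top,
      fun h v _ => Submodule.mem_top⟩
  obtain ⟨m, f, hind, hsup, hprop⟩ := decomp_of_compl (Stable2 ρ X Y) hPinf hPcompl
    (Module.finrank ℂ (⊤ : Submodule ℂ V)) ⊤ le_rfl htop
  exact ⟨Fin m, f, hind, hsup, fun i => hprop i⟩

end Main
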